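/- Let F : ℝ^N → [0,∞) be a Minkowski norm satisfying the uniform convexity inequality with constant l ∈ [0,1]. Then for every r ≥ 2 and all ξ, β ∈ ℝ^N: F^r((ξ+β)/2) + (l^{r/2}/2^r) F^r(β−ξ) ≤ ((F²(ξ)+F²(β))/2)^{r/2}. -/

import Mathlib

open Real

lemma real_add_rpow_le {x y p : ℝ} (hx : 0 ≤ x) (hy : 0 ≤ y) (hp : 1 ≤ p) :
    x ^ p + y ^ p ≤ (x + y) ^ p := by
  have h := NNReal.add_rpow_le_rpow_add (⟨x, hx⟩ : NNReal) (⟨y, hy⟩ : NNReal) hp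
  have h2 := NNReal.coe_le_coe.2 h
  exact_mod_cast h2

theorem stmt_3 (N : ℕ) (F : EuclideanSpace ℝ (Fin N) → ℝ) (l : ℝ) (hl0 : 0 ≤ l) (hl1 : l ≤ 1)
    (hFnonneg : ∀ x, 0 ≤ F x)
    (hFhom : ∀ (t : ℝ), 0 < t → ∀ x, F (t • x) = t * F x)
    (hFconv : ConvexOn ℝ Set.univ F)
    (hFpos : ∀ x : EuclideanSpace ℝ (Fin N), x ≠ 0 → 0 < F x)
    (hUC : ∀ ξ β : EuclideanSpace ℝ (Fin N),
      F ((1 / 2 : ℝ) • (ξ + β)) ^ (2:ℝ)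
        ≤ (F ξ ^ (2:ℝ) + F β ^ (2:ℝ)) / 2 - l / 4 * F (β - ξ) ^ (2:ℝ))
    (r : ℝ) (hr : 2 ≤ r) (ξ β : EuclideanSpace ℝ (Fin N)) :
    F ((1 / 2 : ℝ) • (ξ + β)) ^ r + l ^ (r / 2) / 2 ^ r * F (β - ξ) ^ r
      ≤ ((F ξ ^ (2:ℝ) + F β ^ (2:ℝ)) / 2) ^ (r / 2) := by
  set a := F ((1 / 2 : ℝ) • (ξ + β)) with ha
  set d := F (β - ξ) with hd
  set S := (F ξ ^ (2:ℝ) + F β ^ (2:ℝ)) / 2 with hS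
  have ha0 : 0 ≤ a := hFnonneg _
  have hd0 : 0 ≤ d := hFnonneg _
  have hp : (1:ℝ) ≤ r / 2 := by linarith
  have hb0 : 0 ≤ l / 4 * d ^ (2:ℝ) := by positivity
  have ha2 : 0 ≤ a ^ (2:ℝ) := Real.rpow_nonneg ha0 2
  have hsum : a ^ (2:ℝ) + l / 4 * d ^ (2:ℝ) ≤ S := by
    have := hUC ξ β; linarith
  have hS0 : 0 ≤ S := le_trans (by linarith) hsum
  have key : (a ^ (2:ℝ)) ^ (r/2) + (l / 4 * d ^ (2:ℝ)) ^ (r/2) ≤ S ^ (r/2) := by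
    calc (a ^ (2:ℝ)) ^ (r/2) + (l / 4 * d ^ (2:ℝ)) ^ (r/2)
        ≤ (a ^ (2:ℝ) + l / 4 * d ^ (2:ℝ)) ^ (r/2) := real_add_rpow_le ha2 hb0 hp
      _ ≤ S ^ (r/2) := Real.rpow_le_rpow (by linarith) hsum (by linarith)
  have e1 : (a ^ (2:ℝ)) ^ (r/2) = a ^ r := by
    rw [← Real.rpow_mul ha0]
    ring_nf
  have e2 : (l / 4 * d ^ (2:ℝ)) ^ (r/2) = l ^ (r/2) / 2 ^ r * d ^ r := by
    rw [Real.mul_rpow (by positivity) (by positivity),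
      Real.div_rpow hl0 (by norm_num), ← Real.rpow_mul hd0]
    have h4 : (4:ℝ) ^ (r/2) = 2 ^ r := by
      rw [show (4:ℝ) = 2 ^ (2:ℝ) by norm_num [Real.rpow_natCast], ← Real.rpow_mul (by norm_num)]
      ring_nf
    rw [h4]
    ring_nf
  rw [e1, e2] at key
  exact key
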